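/- Let C be a pre-additive category with a Lawvere metric and let Ỹ : C → Mod-C be the additive Yoneda embedding. If E₁ → E₂ → ⋯ is a Cauchy sequence in C and F = colim Ỹ(E_i) in Mod-C, then for any compactly supported object G ∈ Mod-C, Hom(F, G) ≅ lim Hom(Ỹ(E_i), G) ≅ lim G(E_i), and this inverse limit is attained at a finite stage: Hom(F, G) ≅ G(E_i) for all sufficiently large i. -/

import Mathlib

open CategoryTheory CategoryTheory.Limits

universe w v u

/-- A Lawvere metric on a category `C`: a nonnegative length for every morphism,
with `Length(id) = 0` and the triangle inequality. -/
structure LawvereMetric (C : Type u) [Category.{v} C] where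
  length : ∀ {a b : C}, (a ⟶ b) → ℝ
  length_nonneg : ∀ {a b : C} (f : a ⟶ b), 0 ≤ length f
  length_id : ∀ x : C, length (𝟙 x) = 0
  length_comp : ∀ {a b c : C} (f : a ⟶ b) (g : b ⟶ c),
    length (f ≫ g) ≤ length f + length g

/-- Two Lawvere metrics are equivalent if morphisms short in one are short in the other,
in both directions. -/
def LawvereMetric.Equivalent {C : Type u} [Category.{v} C]
    (L₁ L₂ : LawvereMetric C) : Prop :=
  ∀ ε : ℝ, 0 < ε → ∃ δ : ℝ, 0 < δ ∧
    (∀ {a b : C} (f : a ⟶ b), L₁.length f < δ → L₂.length f < ε) ∧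
    (∀ {a b : C} (f : a ⟶ b), L₂.length f < δ → L₁.length f < ε)

/-- A sequence of composable morphisms (a functor `ℕ ⥤ C`) is Cauchy. -/
def LawvereMetric.IsCauchy {C : Type u} [Category.{v} C] (L : LawvereMetric C)
    (E : ℕ ⥤ C) : Prop :=
  ∀ ε : ℝ, 0 < ε → ∃ M : ℕ, ∀ i j : ℕ, (h : i ≤ j) → M < i →
    L.length (E.map (homOfLE h)) < ε

/-- An object `G` of `Mod-C` is compactly supported if it inverts all sufficiently
short morphisms. -/
def LawvereMetric.CompactlySupportedAdd {C : Type u} [Category.{v} C] [Preadditive C]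
    (L : LawvereMetric C) (G : Cᵒᵖ ⥤ AddCommGrpCat.{v}) : Prop :=
  ∃ ε : ℝ, 0 < ε ∧ ∀ {a b : C} (f : a ⟶ b), L.length f < ε → IsIso (G.map f.op)

open CategoryTheory CategoryTheory.Limits Opposite

namespace HomColimAux

variable {C : Type u} [Category.{v} C] [Preadditive C]
  (G : Cᵒᵖ ⥤ AddCommGrpCat.{v}) [G.Additive]

lemma eval_eq {Y : C} (η : preadditiveYoneda.obj Y ⟶ G) {a : C} (g : a ⟶ Y) :
    η.app (op a) g = G.map g.op (η.app (op Y) (𝟙 Y)) := by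
  have h2 := congrFun (congrArg (fun (t : _ ⟶ _) => (t : _ → _)) (η.naturality g.op)) (𝟙 Y)
  simp only [AddCommGrpCat.coe_comp, Function.comp_apply] at h2
  have h3 : ((preadditiveYoneda.obj Y).map g.op) (𝟙 Y) = g := Category.comp_id g
  exact (congrArg (η.app (op a)) h3).symm.trans h2

/-- The inverse of the additive Yoneda map. -/
noncomputable def yElt {Y : C} (x : G.obj (op Y)) : preadditiveYoneda.obj Y ⟶ G where
  app a := AddCommGrpCat.ofHom (AddMonoidHom.mk' (fun g : unop a ⟶ Y => G.map g.op x) (by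
    intro g g'
    show G.map (g + g').op x = G.map g.op x + G.map g'.op x
    rw [show ((g + g').op : op Y ⟶ a) = g.op + g'.op from rfl, G.map_add]
    rfl))
  naturality a b h := by
    ext g
    show G.map (h.unop ≫ g).op x = G.map h (G.map g.op x)
    rw [show ((h.unop ≫ g).op : op Y ⟶ b) = g.op ≫ h from rfl, G.map_comp]
    rfl

/-- The additive Yoneda equivalence. -/
noncomputable def yEquiv (Y : C) : (preadditiveYoneda.obj Y ⟶ G) ≃ G.obj (op Y) where
  toFun η := η.app (op Y) (𝟙 Y)
  invFun := yElt G
  left_inv η := by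
    ext a g
    exact (eval_eq G η g).symm
  right_inv x := by
    have : ((𝟙 Y).op : op Y ⟶ op Y) = 𝟙 (op Y) := rfl
    simp [yElt, this]
    show G.map (𝟙 Y).op x = x
    rw [this, G.map_id]
    rfl

lemma yEquiv_comp {a b : C} (f : a ⟶ b) (η : preadditiveYoneda.obj b ⟶ G) :
    yEquiv G a (preadditiveYoneda.map f ≫ η) = G.map f.op (yEquiv G b η) := by
  have h1 : yEquiv G a (preadditiveYoneda.map f ≫ η) = η.app (op a) (𝟙 a ≫ f) := rfl
  rw [h1, Category.id_comp, eval_eq G η f]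
  rfl

lemma comp_bijective {a b : C} (f : a ⟶ b) (hf : IsIso (G.map f.op)) :
    Function.Bijective (fun η : preadditiveYoneda.obj b ⟶ G => preadditiveYoneda.map f ≫ η) := by
  have hb : Function.Bijective (G.map f.op) :=
    (ConcreteCategory.bijective_of_isIso (G.map f.op))
  have : (fun η : preadditiveYoneda.obj b ⟶ G => preadditiveYoneda.map f ≫ η) =
      (yEquiv G a).symm ∘ (G.map f.op) ∘ (yEquiv G b) := by
    funext η
    simp only [Function.comp_apply]
    apply (yEquiv G a).injective
    rw [Equiv.apply_symm_apply]
    exact yEquiv_comp G f η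
  rw [this]
  exact ((yEquiv G a).symm.bijective.comp hb).comp (yEquiv G b).bijective

end HomColimAux

/-- Let `Ỹ : C ⥤ Mod-C` be the additive Yoneda embedding, `E` a Cauchy sequence in `C`
and `F = colim Ỹ(E_i)` in `Mod-C`. For any compactly supported `G ∈ Mod-C` we have
`Hom(F, G) ≅ lim Hom(Ỹ(E_i), G) ≅ lim G(E_i)`, and the limit is attained at a finite
stage: for all sufficiently large `i` the canonical map
`Hom(F, G) ⟶ Hom(Ỹ(E_i), G)`, given by composition with the colimit coprojection,
is bijective, so that `Hom(F, G) ≅ G(E_i)` by Yoneda. -/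
theorem hom_from_colimit_of_cauchy {C : Type u} [Category.{v} C] [Preadditive C]
    [HasColimitsOfShape ℕ AddCommGrpCat.{v}]
    (L : LawvereMetric C) (E : ℕ ⥤ C) (hE : L.IsCauchy E)
    (G : Cᵒᵖ ⥤ AddCommGrpCat.{v}) [G.Additive] (hG : L.CompactlySupportedAdd G) :
    ∃ M : ℕ, ∀ i : ℕ, M < i →
      Function.Bijective
        (fun φ : (colimit (E ⋙ preadditiveYoneda) ⟶ G) =>
          colimit.ι (E ⋙ preadditiveYoneda) i ≫ φ) ∧
      Nonempty ((colimit (E ⋙ preadditiveYoneda) ⟶ G) ≃ G.obj (Opposite.op (E.obj i))) := by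
  classical
  obtain ⟨ε, hε, hinv⟩ := hG
  obtain ⟨M, hM⟩ := hE ε hε
  refine ⟨M, fun i hi => ?_⟩
  set D := E ⋙ preadditiveYoneda with hD
  have key : ∀ {j k : ℕ} (h : j ≤ k), M < j →
      Function.Bijective (fun η : D.obj k ⟶ G => D.map (homOfLE h) ≫ η) := by
    intro j k h hj
    exact HomColimAux.comp_bijective G (E.map (homOfLE h)) (hinv _ (hM j k h hj))
  have inj : Function.Injective (fun φ : colimit D ⟶ G => colimit.ι D i ≫ φ) := by
    intro φ ψ hφψ
    dsimp at hφψ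
    apply colimit.hom_ext
    intro j
    rcases le_or_gt j i with hji | hij
    · rw [← colimit.w D (homOfLE hji), Category.assoc, Category.assoc, hφψ]
    · have hij' : i ≤ j := hij.le
      apply (key hij' hi).injective
      show D.map (homOfLE hij') ≫ (colimit.ι D j ≫ φ) =
        D.map (homOfLE hij') ≫ (colimit.ι D j ≫ ψ)
      rw [← Category.assoc, ← Category.assoc, colimit.w D (homOfLE hij'), hφψ]
  have surj : Function.Surjective (fun φ : colimit D ⟶ G => colimit.ι D i ≫ φ) := by
    intro η
    let ψ : ∀ j : ℕ, (D.obj j ⟶ G) := fun j =>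
      if h : i ≤ j then Function.surjInv (key h hi).surjective η
      else D.map (homOfLE (le_of_not_ge h)) ≫ η
    have hψ_ge : ∀ (j) (h : i ≤ j), D.map (homOfLE h) ≫ ψ j = η := by
      intro j h
      simp only [ψ, dif_pos h]
      exact Function.surjInv_eq (key h hi).surjective η
    have hψ_lt : ∀ (j) (h : ¬ i ≤ j), ψ j = D.map (homOfLE (le_of_not_ge h)) ≫ η := by
      intro j h
      simp only [ψ, dif_neg h]
    have hψ_i : ψ i = η := by
      have h2 := hψ_ge i le_rfl
      rwa [show (homOfLE (le_refl i) : (i : ℕ) ⟶ i) = 𝟙 i from rfl, D.map_id,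
        Category.id_comp] at h2
    have compat : ∀ (j k) (h : j ≤ k), D.map (homOfLE h) ≫ ψ k = ψ j := by
      intro j k h
      by_cases hij : i ≤ j
      · apply (key hij hi).injective
        show D.map (homOfLE hij) ≫ (D.map (homOfLE h) ≫ ψ k) = D.map (homOfLE hij) ≫ ψ j
        rw [hψ_ge j hij, ← Category.assoc, ← D.map_comp, homOfLE_comp]
        exact hψ_ge k (hij.trans h)
      · have hji : j ≤ i := le_of_not_ge hij
        rw [hψ_lt j hij]
        by_cases hik : i ≤ k
        · have heq : (homOfLE h : (j : ℕ) ⟶ k) = homOfLE hji ≫ homOfLE hik := by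
            rw [homOfLE_comp]
          rw [heq, D.map_comp, Category.assoc, hψ_ge k hik]
        · have hki : k ≤ i := le_of_not_ge hik
          rw [hψ_lt k hik, ← Category.assoc, ← D.map_comp, homOfLE_comp]
    let c : Cocone D :=
      { pt := G
        ι :=
          { app := ψ
            naturality := by
              intro j k f
              have hf : f = homOfLE (leOfHom f) := Subsingleton.elim _ _
              rw [hf]
              show D.map (homOfLE (leOfHom f)) ≫ ψ k = ψ j ≫ 𝟙 G
              rw [Category.comp_id]
              exact compat j k (leOfHom f) } }
    refine ⟨colimit.desc D c, ?_⟩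
    show colimit.ι D i ≫ colimit.desc D c = η
    rw [colimit.ι_desc]
    exact hψ_i
  exact ⟨⟨inj, surj⟩,
    ⟨(Equiv.ofBijective _ ⟨inj, surj⟩).trans (HomColimAux.yEquiv G (E.obj i))⟩⟩
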